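/- arXiv:2104.05073 — 2 statements merged into one kernel-verified Lean document; each statement's English description precedes it below -/
import Mathlib

section
/- Define Owen's T function by T(h,r) = (1/(2π)) ∫_0^r exp(-h²(1+u²)/2)/(1+u²) du. Then for all real η and r ≥ 0, ∫_{-∞}^{η} e^{-t²} erf(r t) dt = -2√π · T(√2·η, r). -/
open MeasureTheory intervalIntegral

/-- The error function. -/
noncomputable def erf (z : ℝ) : ℝ :=
  (2 / Real.sqrt Real.pi) * ∫ t in (0 : ℝ)..z, Real.exp (-t ^ 2)

/-- Owen's T function. -/
noncomputable def owenT (h r : ℝ) : ℝ :=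
  (1 / (2 * Real.pi)) * ∫ u in (0 : ℝ)..r,
    Real.exp (-h ^ 2 * (1 + u ^ 2) / 2) / (1 + u ^ 2)

lemma inner_int (a : ℝ) (ha : 0 < a) (η : ℝ) :
    ∫ t in Set.Iic η, t * Real.exp (-a * t ^ 2)
      = -Real.exp (-a * η ^ 2) / (2 * a) := by
  have key : ∀ x : ℝ, HasDerivAt (fun t => -Real.exp (-a * t ^ 2) / (2 * a))
      (x * Real.exp (-a * x ^ 2)) x := by
    intro x
    have h1 : HasDerivAt (fun t : ℝ => -a * t ^ 2) (-a * (2 * x)) x := by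
      simpa using (hasDerivAt_pow 2 x).const_mul (-a)
    have h3 := (h1.exp.neg.div_const (2 * a))
    refine h3.congr_deriv ?_
    rw [div_eq_iff (by positivity)]
    ring
  have hint : IntegrableOn (fun t : ℝ => t * Real.exp (-a * t ^ 2)) (Set.Iic η) :=
    (integrable_mul_exp_neg_mul_sq ha).integrableOn
  have hsq : Filter.Tendsto (fun t : ℝ => t ^ 2) Filter.atBot Filter.atTop := by
    have h0 : Filter.Tendsto (fun t : ℝ => t) Filter.atBot Filter.atBot := Filter.tendsto_id
    have := h0.atBot_mul_atBot₀ h0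
    simpa [pow_two] using this
  have htop : Filter.Tendsto (fun t : ℝ => -a * t ^ 2) Filter.atBot Filter.atBot := by
    have := (hsq.const_mul_atTop ha)
    simpa [Function.comp_def, neg_mul] using Filter.tendsto_neg_atTop_atBot.comp this
  have htend : Filter.Tendsto (fun t : ℝ => -Real.exp (-a * t ^ 2) / (2 * a))
      Filter.atBot (nhds 0) := by
    have := (Real.tendsto_exp_atBot.comp htop).neg.div_const (2 * a)
    simpa using this
  have := integral_Iic_of_hasDerivAt_of_tendsto' (fun x _ => key x) hint htend
  simpa using this

theorem erf_integral_owenT (η r : ℝ) (hr : 0 ≤ r) :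
    ∫ t in Set.Iic η, Real.exp (-t ^ 2) * erf (r * t)
      = -2 * Real.sqrt Real.pi * owenT (Real.sqrt 2 * η) r := by
  have hπ : 0 < Real.pi := Real.pi_pos
  have hsπ : (0:ℝ) < Real.sqrt Real.pi := Real.sqrt_pos.mpr hπ
  have step1 : ∀ t : ℝ, erf (r * t)
      = (2 / Real.sqrt Real.pi) * (t * ∫ u in (0:ℝ)..r, Real.exp (-(t*u) ^ 2)) := by
    intro t
    have := intervalIntegral.smul_integral_comp_mul_left
      (f := fun s => Real.exp (-s ^ 2)) (a := (0:ℝ)) (b := r) t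
    rw [erf, mul_comm r t]
    rw [smul_eq_mul] at this
    rw [this]
    simp
  set f : ℝ → ℝ → ℝ := fun t u => t * Real.exp (-(1 + u ^ 2) * t ^ 2) with hf
  have hcont : Continuous (Function.uncurry f) := by
    apply Continuous.mul continuous_fst
    apply Real.continuous_exp.comp
    fun_prop
  have hintg : Integrable (Function.uncurry f)
      ((volume.restrict (Set.Iic η)).prod (volume.restrict (Set.Ioc 0 r))) := by
    have hg : Integrable (fun p : ℝ × ℝ => (|p.1| * Real.exp (-p.1 ^ 2)) * (1:ℝ))
        ((volume.restrict (Set.Iic η)).prod (volume.restrict (Set.Ioc 0 r))) := by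
      have h1 : Integrable (fun t : ℝ => |t| * Real.exp (-t ^ 2))
          (volume.restrict (Set.Iic η)) :=
        ((integrable_mul_exp_neg_mul_sq one_pos).abs.congr
          (by filter_upwards with x; simp [abs_mul, abs_of_nonneg (Real.exp_pos _).le])).restrict
      have h2 : Integrable (fun _ : ℝ => (1:ℝ)) (volume.restrict (Set.Ioc 0 r)) :=
        integrableOn_const measure_Ioc_lt_top.ne
      exact h1.mul_prod h2
    refine hg.mono hcont.aestronglyMeasurable ?_
    filter_upwards with p
    simp only [Function.uncurry, hf, Real.norm_eq_abs, abs_mul, mul_one]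
    rw [abs_of_nonneg (Real.exp_pos _).le, abs_of_nonneg (Real.exp_pos _).le, abs_abs]
    apply mul_le_mul_of_nonneg_left _ (abs_nonneg _)
    apply Real.exp_le_exp.mpr
    nlinarith [sq_nonneg p.1, sq_nonneg p.2, sq_nonneg (p.1 * p.2)]
  have step2 : (∫ t in Set.Iic η, Real.exp (-t ^ 2) * erf (r * t))
      = (2 / Real.sqrt Real.pi) * ∫ t in Set.Iic η, ∫ u in Set.Ioc 0 r, f t u := by
    rw [← MeasureTheory.integral_const_mul]
    apply setIntegral_congr_fun measurableSet_Iic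
    intro t _
    dsimp only
    rw [step1 t, intervalIntegral.integral_of_le hr]
    have hrw : Real.exp (-t ^ 2) * ((2 / Real.sqrt Real.pi)
          * (t * ∫ u in Set.Ioc 0 r, Real.exp (-(t*u) ^ 2)))
        = (2 / Real.sqrt Real.pi) * ((Real.exp (-t ^ 2) * t)
          * ∫ u in Set.Ioc 0 r, Real.exp (-(t*u) ^ 2)) := by ring
    rw [hrw, ← MeasureTheory.integral_const_mul]
    congr 1
    apply setIntegral_congr_fun measurableSet_Ioc
    intro u _
    dsimp only [hf]
    rw [mul_comm (Real.exp (-t ^ 2)) t, mul_assoc, ← Real.exp_add]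
    congr 1
    ring
  rw [step2]
  rw [MeasureTheory.integral_integral_swap hintg]
  have step3 : (∫ u in Set.Ioc 0 r, ∫ t in Set.Iic η, f t u)
      = ∫ u in Set.Ioc 0 r, -Real.exp (-(1 + u ^ 2) * η ^ 2) / (2 * (1 + u ^ 2)) := by
    apply setIntegral_congr_fun measurableSet_Ioc
    intro u _
    exact inner_int (1 + u ^ 2) (by positivity) η
  rw [step3]
  rw [owenT, ← intervalIntegral.integral_of_le hr]
  have h2 : (Real.sqrt 2 * η) ^ 2 = 2 * η ^ 2 := by
    rw [mul_pow, Real.sq_sqrt (by norm_num : (0:ℝ) ≤ 2)]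
  have step4 : (∫ u in (0:ℝ)..r, -Real.exp (-(1 + u ^ 2) * η ^ 2) / (2 * (1 + u ^ 2)))
      = (-1/2) * ∫ u in (0:ℝ)..r,
        Real.exp (-(Real.sqrt 2 * η) ^ 2 * (1 + u ^ 2) / 2) / (1 + u ^ 2) := by
    rw [← intervalIntegral.integral_const_mul]
    apply intervalIntegral.integral_congr
    intro u _
    dsimp only
    rw [h2]
    rw [show -(2 * η ^ 2) * (1 + u ^ 2) / 2 = -(1 + u ^ 2) * η ^ 2 from by ring]
    have hu : (1:ℝ) + u ^ 2 ≠ 0 := by positivity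
    field_simp
  rw [step4]
  have hππ : Real.sqrt Real.pi * Real.sqrt Real.pi = Real.pi :=
    Real.mul_self_sqrt hπ.le
  generalize (∫ u in (0:ℝ)..r,
    Real.exp (-(Real.sqrt 2 * η) ^ 2 * (1 + u ^ 2) / 2) / (1 + u ^ 2)) = J
  rw [← hππ]
  have hne := hsπ.ne'
  field_simp
  rw [Real.sqrt_sq hsπ.le]
end

section
/- Define Y(η, r) = (2/√π) ∫_0^η e^{-u²} erf(r u)² du. Then lim_{η→+∞} Y(η, r) = (2/π)·arcsin(r²/(1+r²)). -/
open intervalIntegral Filter MeasureTheory Set Real Topology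

/-- The function 𝓨(η, r). -/
noncomputable def Yfun (η r : ℝ) : ℝ :=
  (2 / Real.sqrt Real.pi) * ∫ u in (0 : ℝ)..η, Real.exp (-u ^ 2) * erf (r * u) ^ 2

lemma erf_zero : erf 0 = 0 := by simp [erf]

lemma cont_gauss : Continuous fun t : ℝ => Real.exp (-t ^ 2) := by continuity

lemma hasDerivAt_erf (x : ℝ) :
    HasDerivAt erf (2 / Real.sqrt Real.pi * Real.exp (-x ^ 2)) x := by
  have h := intervalIntegral.integral_hasDerivAt_right
    (cont_gauss.intervalIntegrable 0 x)
    (cont_gauss.stronglyMeasurableAtFilter _ _) cont_gauss.continuousAt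
  rw [show erf = fun z => (2 / Real.sqrt Real.pi) * ∫ t in (0 : ℝ)..z, Real.exp (-t ^ 2) from rfl]
  exact h.const_mul (2 / Real.sqrt Real.pi)

lemma erf_continuous : Continuous erf :=
  continuous_iff_continuousAt.2 fun x => (hasDerivAt_erf x).continuousAt

lemma erf_neg (x : ℝ) : erf (-x) = - erf x := by
  unfold erf
  rw [← mul_neg]
  congr 1
  have h := intervalIntegral.integral_comp_neg (a := 0) (b := x) (fun t => Real.exp (-t ^ 2))
  simp only [neg_zero] at h
  rw [show (∫ t in (0:ℝ)..x, Real.exp (-(-t) ^ 2)) = ∫ t in (0:ℝ)..x, Real.exp (-t ^ 2) from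
    intervalIntegral.integral_congr fun t _ => by ring_nf] at h
  rw [intervalIntegral.integral_symm, ← h]

lemma erf_nonneg_of_nonneg {x : ℝ} (hx : 0 ≤ x) : 0 ≤ erf x := by
  unfold erf
  apply mul_nonneg (by positivity)
  apply intervalIntegral.integral_nonneg hx
  intro t _; positivity

lemma erf_le_one_of_nonneg {x : ℝ} (hx : 0 ≤ x) : erf x ≤ 1 := by
  have h1 : (∫ t in (0:ℝ)..x, Real.exp (-t ^ 2)) ≤ Real.sqrt Real.pi / 2 := by
    rw [intervalIntegral.integral_of_le hx]
    have : (∫ t in Ioc (0:ℝ) x, Real.exp (-t ^ 2)) ≤ ∫ t in Ioi (0:ℝ), Real.exp (-t ^ 2) := by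
      apply setIntegral_mono_set
      · have := (integrable_exp_neg_mul_sq (by norm_num : (0:ℝ) < 1)).integrableOn (s := Ioi 0)
        simpa using this
      · filter_upwards with t using by positivity
      · filter_upwards with t ht using ht.1
    refine this.trans ?_
    have := integral_gaussian_Ioi 1
    simp only [neg_mul, one_mul] at this
    rw [this, div_one]
  unfold erf
  have hs : 0 < Real.sqrt Real.pi := Real.sqrt_pos.2 Real.pi_pos
  calc 2 / Real.sqrt Real.pi * ∫ t in (0:ℝ)..x, Real.exp (-t ^ 2)
      ≤ 2 / Real.sqrt Real.pi * (Real.sqrt Real.pi / 2) := by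
        apply mul_le_mul_of_nonneg_left h1 (by positivity)
    _ = 1 := by field_simp

lemma abs_erf_le_one (x : ℝ) : |erf x| ≤ 1 := by
  rcases le_or_gt 0 x with hx | hx
  · rw [abs_of_nonneg (erf_nonneg_of_nonneg hx)]; exact erf_le_one_of_nonneg hx
  · have := erf_le_one_of_nonneg (le_of_lt (neg_pos.2 hx))
    rw [erf_neg] at this
    have h0 := erf_nonneg_of_nonneg (le_of_lt (neg_pos.2 hx))
    rw [erf_neg] at h0
    rw [abs_of_nonpos (by linarith)]
    linarith

lemma integrable_gauss_Ioi {b : ℝ} (hb : 0 < b) :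
    IntegrableOn (fun u : ℝ => Real.exp (-b * u ^ 2)) (Ioi 0) :=
  (integrable_exp_neg_mul_sq hb).integrableOn

lemma integrable_mul_gauss_Ioi {b : ℝ} (hb : 0 < b) :
    IntegrableOn (fun u : ℝ => u * Real.exp (-b * u ^ 2)) (Ioi 0) :=
  (integrable_mul_exp_neg_mul_sq hb).integrableOn

lemma integrable_mul_gauss_erf_Ioi {a : ℝ} (ha : 0 < a) (c : ℝ) :
    IntegrableOn (fun u : ℝ => u * Real.exp (-a * u ^ 2) * erf (c * u)) (Ioi 0) := by
  have hc : Continuous fun u : ℝ => u * Real.exp (-a * u ^ 2) * erf (c * u) := by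
    apply Continuous.mul
    · exact continuous_id.mul (Real.continuous_exp.comp (by continuity))
    · exact erf_continuous.comp (continuous_const.mul continuous_id)
  apply (integrable_mul_gauss_Ioi ha).mono'
  · exact hc.aestronglyMeasurable
  · filter_upwards [ae_restrict_mem measurableSet_Ioi] with u hu
    have h1 : |erf (c * u)| ≤ 1 := abs_erf_le_one _
    have : (0:ℝ) < u := hu
    rw [Real.norm_eq_abs, abs_mul]
    calc |u * Real.exp (-a * u ^ 2)| * |erf (c * u)|
        ≤ |u * Real.exp (-a * u ^ 2)| * 1 := by
          apply mul_le_mul_of_nonneg_left h1 (abs_nonneg _)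
      _ = u * Real.exp (-a * u ^ 2) := by
          rw [mul_one, abs_of_nonneg (by positivity)]

/-- The key integral: `∫_0^∞ u e^{-au²} erf(bu) du = b / (2a √(a+b²))`. -/
lemma integralB {a : ℝ} (ha : 0 < a) (b : ℝ) :
    (∫ u in Ioi (0:ℝ), u * Real.exp (-a * u ^ 2) * erf (b * u))
      = b / (2 * a * Real.sqrt (a + b ^ 2)) := by
  have hs : (0:ℝ) < Real.sqrt Real.pi := Real.sqrt_pos.2 Real.pi_pos
  have hab : (0:ℝ) < a + b ^ 2 := by positivity
  set g : ℝ → ℝ := fun u => -(Real.exp (-a * u ^ 2) * erf (b * u)) / (2 * a) with hg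
  set g' : ℝ → ℝ := fun u => u * Real.exp (-a * u ^ 2) * erf (b * u)
      - b / (a * Real.sqrt Real.pi) * Real.exp (-(a + b ^ 2) * u ^ 2) with hg'
  have hderiv : ∀ x ∈ Ici (0:ℝ), HasDerivAt g (g' x) x := by
    intro x _
    have h1 : HasDerivAt (fun u : ℝ => Real.exp (-a * u ^ 2))
        (Real.exp (-a * x ^ 2) * (-a * (2 * x))) x := by
      have hin : HasDerivAt (fun u : ℝ => -a * u ^ 2) (-a * (2 * x)) x := by
        simpa using (hasDerivAt_pow 2 x).const_mul (-a)
      exact (Real.hasDerivAt_exp _).comp x hin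
    have h2 : HasDerivAt (fun u : ℝ => erf (b * u))
        (2 / Real.sqrt Real.pi * Real.exp (-(b * x) ^ 2) * b) x := by
      have hin : HasDerivAt (fun u : ℝ => b * u) b x := by
        simpa using (hasDerivAt_id x).const_mul b
      exact (hasDerivAt_erf (b * x)).comp x hin
    have h3 := ((h1.mul h2).neg).div_const (2 * a)
    refine h3.congr_deriv ?_
    symm
    have hexp : Real.exp (-(a + b ^ 2) * x ^ 2)
        = Real.exp (-a * x ^ 2) * Real.exp (-(b * x) ^ 2) := by
      rw [← Real.exp_add]; ring_nf
    rw [hg']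
    simp only []
    rw [hexp]
    field_simp
    ring
  have htend : Tendsto g atTop (𝓝 (0:ℝ)) := by
    have hbnd : ∀ u, ‖g u‖ ≤ Real.exp (-a * u ^ 2) / (2 * a) := by
      intro u
      calc ‖g u‖ = Real.exp (-a * u ^ 2) * |erf (b * u)| / (2 * a) := by
            rw [hg, Real.norm_eq_abs, abs_div, abs_neg, abs_mul, Real.abs_exp,
              abs_of_pos (by positivity : (0:ℝ) < 2 * a)]
        _ ≤ Real.exp (-a * u ^ 2) * 1 / (2 * a) := by
            gcongr
            exact abs_erf_le_one _
        _ = Real.exp (-a * u ^ 2) / (2 * a) := by rw [mul_one]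
    have h4 : Tendsto (fun u : ℝ => -a * u ^ 2) atTop atBot := by
      have h5 : Tendsto (fun u : ℝ => u ^ 2) atTop atTop :=
        tendsto_pow_atTop (by norm_num)
      have := h5.const_mul_atTop ha
      exact tendsto_neg_atBot_iff.mpr this |>.congr (fun u => by ring)
    have hlim := (Real.tendsto_exp_atBot.comp h4).div_const (2 * a)
    simp only [Function.comp, zero_div] at hlim
    exact squeeze_zero_norm hbnd hlim
  have hint : IntegrableOn g' (Ioi 0) := by
    apply (integrable_mul_gauss_erf_Ioi ha b).sub
    exact ((integrable_gauss_Ioi hab).const_mul _)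
  have key := integral_Ioi_of_hasDerivAt_of_tendsto' hderiv hint htend
  rw [hg] at key
  simp only [erf_zero, mul_zero, zero_mul, neg_zero, zero_div, sub_zero] at key
  rw [hg'] at key
  rw [integral_sub (integrable_mul_gauss_erf_Ioi ha b)
    ((integrable_gauss_Ioi hab).const_mul _), sub_eq_zero] at key
  rw [key, MeasureTheory.integral_const_mul, integral_gaussian_Ioi,
    Real.sqrt_div Real.pi_pos.le]
  have h6 : Real.sqrt (a + b ^ 2) ≠ 0 := by positivity
  field_simp

noncomputable def Ffun (r : ℝ) : ℝ := ∫ u in Ioi (0:ℝ), Real.exp (-u ^ 2) * erf (r * u) ^ 2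

lemma integrand_integrable (r : ℝ) :
    IntegrableOn (fun u : ℝ => Real.exp (-u ^ 2) * erf (r * u) ^ 2) (Ioi 0) := by
  have hg : IntegrableOn (fun u : ℝ => Real.exp (-(1:ℝ) * u ^ 2)) (Ioi 0) :=
    integrable_gauss_Ioi one_pos
  apply hg.mono'
  · exact ((cont_gauss).mul
      ((erf_continuous.comp (continuous_const.mul continuous_id)).pow 2)).aestronglyMeasurable
  · filter_upwards with u
    rw [Real.norm_eq_abs, abs_mul, Real.abs_exp, abs_pow]
    have h1 : |erf (r * u)| ^ 2 ≤ 1 := by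
      have h := abs_erf_le_one (r * u)
      have h0 := abs_nonneg (erf (r * u))
      nlinarith
    calc Real.exp (-u ^ 2) * |erf (r * u)| ^ 2 ≤ Real.exp (-u ^ 2) * 1 :=
          mul_le_mul_of_nonneg_left h1 (Real.exp_pos _).le
      _ = Real.exp (-(1:ℝ) * u ^ 2) := by rw [mul_one]; ring_nf

lemma Ffun_hasDerivAt (r : ℝ) :
    HasDerivAt Ffun
      (4 / Real.sqrt Real.pi * (r / (2 * (1 + r ^ 2) * Real.sqrt (1 + 2 * r ^ 2)))) r := by
  have hs : (0:ℝ) < Real.sqrt Real.pi := Real.sqrt_pos.2 Real.pi_pos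
  set F' : ℝ → ℝ → ℝ := fun s u =>
    Real.exp (-u ^ 2) * (2 * erf (s * u) * (2 / Real.sqrt Real.pi * Real.exp (-(s * u) ^ 2) * u))
    with hF'
  have key := _root_.hasDerivAt_integral_of_dominated_loc_of_deriv_le (μ := volume.restrict (Ioi 0))
    (F := fun s u => Real.exp (-u ^ 2) * erf (s * u) ^ 2) (F' := F')
    (x₀ := r) (s := Metric.ball r 1) (bound := fun u => 4 / Real.sqrt Real.pi * (u * Real.exp (-u ^ 2)))
    (Metric.ball_mem_nhds r one_pos)
    (Eventually.of_forall fun s => ((cont_gauss).mul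
      ((erf_continuous.comp (continuous_const.mul continuous_id)).pow 2)).aestronglyMeasurable)
    (integrand_integrable r)
    (by
      apply Continuous.aestronglyMeasurable
      apply cont_gauss.mul
      apply Continuous.mul
      · exact continuous_const.mul (erf_continuous.comp (continuous_const.mul continuous_id))
      · exact (continuous_const.mul (Real.continuous_exp.comp (by continuity))).mul continuous_id)
    (by
      filter_upwards [ae_restrict_mem measurableSet_Ioi] with u hu s _
      have hu0 : (0:ℝ) < u := hu
      rw [hF']
      simp only [Real.norm_eq_abs, abs_mul, Real.abs_exp, abs_two, abs_div,
        abs_of_pos hu0, abs_of_pos hs]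
      have he1 : Real.exp (-(s * u) ^ 2) ≤ 1 :=
        Real.exp_le_one_iff.mpr (neg_nonpos.2 (sq_nonneg _))
      calc Real.exp (-u ^ 2) * (2 * |erf (s * u)| * (2 / Real.sqrt Real.pi *
              Real.exp (-(s * u) ^ 2) * u))
          ≤ Real.exp (-u ^ 2) * (2 * 1 * (2 / Real.sqrt Real.pi * 1 * u)) := by
            gcongr <;> first
              | exact abs_erf_le_one _
              | exact he1
        _ = 4 / Real.sqrt Real.pi * (u * Real.exp (-u ^ 2)) := by ring)
    (by
      have h := (integrable_mul_gauss_Ioi one_pos).const_mul (4 / Real.sqrt Real.pi)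
      apply h.congr
      filter_upwards with u
      ring_nf)
    (by
      filter_upwards with u s _
      have h2 : HasDerivAt (fun s : ℝ => erf (s * u)) (2 / Real.sqrt Real.pi *
          Real.exp (-(s * u) ^ 2) * u) s := by
        have hin : HasDerivAt (fun s : ℝ => s * u) u s := by
          simpa using (hasDerivAt_id s).mul_const u
        have := (hasDerivAt_erf (s * u)).comp s hin
        exact this
      have h3 := ((h2.pow 2).const_mul (Real.exp (-u ^ 2)))
      rw [hF']
      refine h3.congr_deriv ?_
      symm
      ring)
  have hval : (∫ u in Ioi (0:ℝ), F' r u)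
      = 4 / Real.sqrt Real.pi * (r / (2 * (1 + r ^ 2) * Real.sqrt (1 + 2 * r ^ 2))) := by
    have hrw : ∀ u : ℝ, F' r u
        = 4 / Real.sqrt Real.pi * (u * Real.exp (-(1 + r ^ 2) * u ^ 2) * erf (r * u)) := by
      intro u
      rw [hF']
      have hexp : Real.exp (-u ^ 2) * Real.exp (-(r * u) ^ 2)
          = Real.exp (-(1 + r ^ 2) * u ^ 2) := by
        rw [← Real.exp_add]; ring_nf
      calc Real.exp (-u ^ 2) * (2 * erf (r * u) *
              (2 / Real.sqrt Real.pi * Real.exp (-(r * u) ^ 2) * u))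
          = 4 / Real.sqrt Real.pi * (u * (Real.exp (-u ^ 2) * Real.exp (-(r * u) ^ 2))
              * erf (r * u)) := by ring
        _ = _ := by rw [hexp]
    simp_rw [hrw]
    rw [MeasureTheory.integral_const_mul, integralB (by positivity : (0:ℝ) < 1 + r ^ 2) r]
    rw [show (1 + r ^ 2) + r ^ 2 = 1 + 2 * r ^ 2 by ring]
  have h2 := key.2
  rw [hval] at h2
  exact h2

lemma theta_hasDerivAt (r : ℝ) :
    HasDerivAt (fun s : ℝ => Real.arcsin (s ^ 2 / (1 + s ^ 2)))
      (2 * r / ((1 + r ^ 2) * Real.sqrt (1 + 2 * r ^ 2))) r := by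
  have h1 : (0:ℝ) < 1 + r ^ 2 := by positivity
  have hx : r ^ 2 / (1 + r ^ 2) < 1 := by
    rw [div_lt_one h1]; linarith
  have hx0 : (0:ℝ) ≤ r ^ 2 / (1 + r ^ 2) := by positivity
  have hinner : HasDerivAt (fun s : ℝ => s ^ 2 / (1 + s ^ 2))
      (2 * r / (1 + r ^ 2) ^ 2) r := by
    have ha : HasDerivAt (fun s : ℝ => s ^ 2) (2 * r) r := by
      simpa using hasDerivAt_pow 2 r
    have hb : HasDerivAt (fun s : ℝ => 1 + s ^ 2) (2 * r) r := by
      simpa using ha.const_add 1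
    have := ha.div hb (by positivity)
    refine this.congr_deriv ?_
    symm
    field_simp
    ring
  have harc := Real.hasDerivAt_arcsin (by linarith : r ^ 2 / (1 + r ^ 2) ≠ -1)
    (by linarith : r ^ 2 / (1 + r ^ 2) ≠ 1)
  have hcomp := harc.comp r hinner
  refine hcomp.congr_deriv ?_
  symm
  have hsq : 1 - (r ^ 2 / (1 + r ^ 2)) ^ 2 = (1 + 2 * r ^ 2) / (1 + r ^ 2) ^ 2 := by
    field_simp
    ring
  rw [hsq, Real.sqrt_div (by positivity), Real.sqrt_sq h1.le]
  have h5 : Real.sqrt (1 + 2 * r ^ 2) ≠ 0 := by positivity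
  field_simp

lemma Ffun_eq (r : ℝ) :
    2 / Real.sqrt Real.pi * Ffun r = 2 / Real.pi * Real.arcsin (r ^ 2 / (1 + r ^ 2)) := by
  have hππ : Real.sqrt Real.pi * Real.sqrt Real.pi = Real.pi :=
    Real.mul_self_sqrt Real.pi_pos.le
  have hs : (0:ℝ) < Real.sqrt Real.pi := Real.sqrt_pos.2 Real.pi_pos
  set Φ : ℝ → ℝ := fun s => 2 / Real.sqrt Real.pi * Ffun s
      - 2 / Real.pi * Real.arcsin (s ^ 2 / (1 + s ^ 2)) with hΦ
  have hderiv : ∀ s, HasDerivAt Φ 0 s := by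
    intro s
    have h1 := (Ffun_hasDerivAt s).const_mul (2 / Real.sqrt Real.pi)
    have h2 := (theta_hasDerivAt s).const_mul (2 / Real.pi)
    have h3 := h1.sub h2
    refine h3.congr_deriv ?_
    symm
    have h5 : Real.sqrt (1 + 2 * s ^ 2) ≠ 0 := by positivity
    have h6 : (0:ℝ) < 1 + s ^ 2 := by positivity
    rw [show (2:ℝ) / Real.pi = 2 / (Real.sqrt Real.pi * Real.sqrt Real.pi) by rw [hππ]]
    field_simp
    linear_combination
  have h0 : Φ 0 = 0 := by
    rw [hΦ]
    have : Ffun 0 = 0 := by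
      unfold Ffun
      simp [erf_zero]
    simp [this]
  have hconst := is_const_of_deriv_eq_zero (𝕜 := ℝ) (f := Φ)
    (fun x => (hderiv x).differentiableAt) (fun x => (hderiv x).deriv) r 0
  rw [h0, hΦ] at hconst
  linarith [hconst]

theorem Yfun_tendsto (r : ℝ) (hr : 0 ≤ r) :
    Tendsto (fun η => Yfun η r) atTop
      (nhds ((2 / Real.pi) * Real.arcsin (r ^ 2 / (1 + r ^ 2)))) := by
  have h := (MeasureTheory.intervalIntegral_tendsto_integral_Ioi 0
    (integrand_integrable r) tendsto_id).const_mul (2 / Real.sqrt Real.pi)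
  rw [← Ffun_eq r]
  simpa [Yfun, Ffun] using h
end
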